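/- Let X be a nonempty compact Hausdorff space, let (X; f_1, …, f_N) be a point-fibred iterated function system on X with attractor A = π(I^∞), and define F(B) = ⋃_{i=1}^N f_i(B) for B ⊆ X. Then for every nonempty compact set B ⊆ X the iterates F^k(B) converge to A in the Vietoris sense: (a) for every open set U ⊇ A there exists K such that F^k(B) ⊆ U for all k ≥ K, and (b) for every open set V with V ∩ A ≠ ∅ there exists K such that F^k(B) ∩ V ≠ ∅ for all k ≥ K. In particular A is an attractor of the IFS whose basin is all of X. -/

import Mathlib

/-- `seqComp f σ k = f (σ 0) ∘ f (σ 1) ∘ ⋯ ∘ f (σ (k-1))`. -/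
def seqComp {X : Type*} {N : ℕ} (f : Fin N → X → X) (σ : ℕ → Fin N) : ℕ → X → X
  | 0 => id
  | k + 1 => seqComp f σ k ∘ f (σ k)

/-- The Hutchinson set map `F(B) = ⋃_{i=1}^N f_i(B)`. -/
def Fmap {X : Type*} {N : ℕ} (f : Fin N → X → X) (B : Set X) : Set X :=
  ⋃ i, f i '' B

section Aux

variable {X : Type*} {N : ℕ} (f : Fin N → X → X)

lemma seqComp_congr {k : ℕ} {σ τ : ℕ → Fin N} (h : ∀ j < k, σ j = τ j) :
    seqComp f σ k = seqComp f τ k := by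
  induction k with
  | zero => rfl
  | succ k ih =>
    show seqComp f σ k ∘ f (σ k) = seqComp f τ k ∘ f (τ k)
    rw [ih (fun j hj => h j (Nat.lt_succ_of_lt hj)), h k (Nat.lt_succ_self k)]

lemma seqComp_image_subset (σ : ℕ → Fin N) (K m : ℕ) (B : Set X) :
    seqComp f σ (K + m) '' B ⊆ seqComp f σ K '' Set.univ := by
  induction m generalizing B with
  | zero => exact Set.image_mono (Set.subset_univ B)
  | succ m ih =>
    have h : seqComp f σ (K + (m + 1)) = seqComp f σ (K + m) ∘ f (σ (K + m)) := rfl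
    rw [h, Set.image_comp]
    exact ih _

lemma seqComp_image_subset' (σ : ℕ → Fin N) {K k : ℕ} (hK : K ≤ k) (B : Set X) :
    seqComp f σ k '' B ⊆ seqComp f σ K '' Set.univ := by
  have := seqComp_image_subset f σ K (k - K) B
  rwa [Nat.add_sub_cancel' hK] at this

lemma seqComp_continuous [TopologicalSpace X] (hf : ∀ i, Continuous (f i))
    (σ : ℕ → Fin N) (k : ℕ) : Continuous (seqComp f σ k) := by
  induction k with
  | zero => exact continuous_id
  | succ k ih => exact ih.comp (hf (σ k))

lemma seqComp_mem_iterate (σ : ℕ → Fin N) (k : ℕ) :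
    ∀ B : Set X, ∀ b ∈ B, seqComp f σ k b ∈ (Fmap f)^[k] B := by
  induction k with
  | zero => intro B b hb; exact hb
  | succ k ih =>
    intro B b hb
    rw [Function.iterate_succ_apply]
    exact ih (Fmap f B) (f (σ k) b) (Set.mem_iUnion.2 ⟨σ k, ⟨b, hb, rfl⟩⟩)

lemma iterate_subset_iUnion (hN : 0 < N) (k : ℕ) :
    ∀ B : Set X, (Fmap f)^[k] B ⊆ ⋃ σ : ℕ → Fin N, seqComp f σ k '' B := by
  induction k with
  | zero =>
    intro B x hx
    exact Set.mem_iUnion.2 ⟨fun _ => ⟨0, hN⟩, ⟨x, hx, rfl⟩⟩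
  | succ k ih =>
    intro B x hx
    rw [Function.iterate_succ_apply] at hx
    obtain ⟨σ, y, hy, hxy⟩ := Set.mem_iUnion.1 (ih (Fmap f B) hx)
    obtain ⟨i, b, hb, rfl⟩ := Set.mem_iUnion.1 hy
    refine Set.mem_iUnion.2 ⟨Function.update σ k i, ⟨b, hb, ?_⟩⟩
    have h1 : seqComp f (Function.update σ k i) (k + 1) b = seqComp f σ k (f i b) := by
      show seqComp f (Function.update σ k i) k (f (Function.update σ k i k) b) = _
      rw [Function.update_self,
        seqComp_congr f (fun j hj => Function.update_of_ne (β := fun _ => Fin N) (show j ≠ k from Nat.ne_of_lt hj) i σ)]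
    rw [h1, hxy]

/-- The nested compact sets `seqComp f σ k '' univ` eventually enter any open set
containing their intersection point. -/
lemma exists_level [TopologicalSpace X] [CompactSpace X] [T2Space X]
    (hf : ∀ i, Continuous (f i)) (σ : ℕ → Fin N) (π : (ℕ → Fin N) → X)
    (hπ : (⋂ k : ℕ, seqComp f σ k '' (Set.univ : Set X)) = {π σ})
    {U : Set X} (hU : IsOpen U) (hπU : π σ ∈ U) :
    ∃ K : ℕ, seqComp f σ K '' Set.univ ⊆ U := by
  have hdir : Directed (· ⊇ ·) (fun k => seqComp f σ k '' (Set.univ : Set X)) := by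
    apply Antitone.directed_ge
    intro a b hab
    exact seqComp_image_subset' f σ hab Set.univ
  exact exists_subset_nhds_of_isCompact' hdir
    (fun k => isCompact_univ.image (seqComp_continuous f hf σ k))
    (fun k => (isCompact_univ.image (seqComp_continuous f hf σ k)).isClosed)
    (fun x hx => by
      rw [hπ, Set.mem_singleton_iff] at hx
      exact hU.mem_nhds (hx ▸ hπU))

end Aux

/-- For a point-fibred IFS with attractor `A = π(I^∞)` and Hutchinson map
`F(B) = ⋃ i, f i '' B`, for every nonempty compact `B` the iterates `F^k(B)` converge
to `A` in the Vietoris sense: (a) for every open `U ⊇ A` eventually `F^k(B) ⊆ U`, and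
(b) for every open `V` meeting `A` eventually `F^k(B) ∩ V ≠ ∅`. -/
theorem iterates_converge_to_attractor
    {X : Type*} [TopologicalSpace X] [CompactSpace X] [T2Space X] [Nonempty X]
    {N : ℕ} (hN : 0 < N) (f : Fin N → X → X) (hf : ∀ i, Continuous (f i))
    (π : (ℕ → Fin N) → X)
    (hπ : ∀ σ : ℕ → Fin N,
      (⋂ k : ℕ, seqComp f σ k '' (Set.univ : Set X)) = {π σ}) :
    ∀ B : Set X, B.Nonempty → IsCompact B →
      (∀ U : Set X, IsOpen U → Set.range π ⊆ U →
        ∃ K : ℕ, ∀ k ≥ K, (Fmap f)^[k] B ⊆ U) ∧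
      (∀ V : Set X, IsOpen V → (Set.range π ∩ V).Nonempty →
        ∃ K : ℕ, ∀ k ≥ K, ((Fmap f)^[k] B ∩ V).Nonempty) := by
  have hne : Nonempty (Fin N) := ⟨⟨0, hN⟩⟩
  intro B hBne _hBc
  constructor
  · -- (a)
    intro U hU hAU
    set W : ℕ → Set (ℕ → Fin N) := fun k => {σ | seqComp f σ k '' Set.univ ⊆ U} with hWdef
    have hWopen : ∀ k, IsOpen (W k) := by
      intro k
      have hsat : W k =
          (fun (σ : ℕ → Fin N) (j : Fin k) => σ j) ⁻¹'
            ((fun (σ : ℕ → Fin N) (j : Fin k) => σ j) '' W k) := by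
        apply subset_antisymm (Set.subset_preimage_image _ _)
        rintro σ ⟨τ, hτ, hστ⟩
        have h : seqComp f σ k = seqComp f τ k :=
          seqComp_congr f (fun j hj => (congrFun hστ ⟨j, hj⟩ : τ j = σ j).symm)
        show seqComp f σ k '' Set.univ ⊆ U
        rw [h]; exact hτ
      rw [hsat]
      exact (isOpen_discrete _).preimage (continuous_pi fun j => continuous_apply _)
    have hcover : (Set.univ : Set (ℕ → Fin N)) ⊆ ⋃ k, W k := by
      intro σ _
      obtain ⟨K, hK⟩ := exists_level f hf σ π (hπ σ) hU (hAU (Set.mem_range_self σ))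
      exact Set.mem_iUnion.2 ⟨K, hK⟩
    obtain ⟨s, hs⟩ := isCompact_univ.elim_finite_subcover W hWopen hcover
    refine ⟨s.sup id, fun k hk x hx => ?_⟩
    obtain ⟨σ, y, hy, rfl⟩ := Set.mem_iUnion.1 (iterate_subset_iUnion f hN k B hx)
    obtain ⟨m, hm, hσm⟩ := Set.mem_iUnion₂.1 (hs (Set.mem_univ σ))
    have hmk : m ≤ k := le_trans (Finset.le_sup (f := id) hm) hk
    exact hσm (seqComp_image_subset' f σ hmk B ⟨y, hy, rfl⟩)
  · -- (b)
    rintro V hV ⟨a, ⟨σ, rfl⟩, haV⟩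
    obtain ⟨K, hK⟩ := exists_level f hf σ π (hπ σ) hV haV
    obtain ⟨b, hb⟩ := hBne
    refine ⟨K, fun k hk => ⟨seqComp f σ k b, seqComp_mem_iterate f σ k B b hb, ?_⟩⟩
    exact hK (seqComp_image_subset' f σ hk B ⟨b, hb, rfl⟩)
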